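/- For finite nonempty sets of integers A, B, C, the inequality 2|A + B + C| ≥ |A + B| + |B + C| + |A + C| − 1 holds. -/
import Mathlib


open Pointwise

theorem superadditivity_three_sets (A B C : Finset ℤ)
    (hA : A.Nonempty) (hB : B.Nonempty) (hC : C.Nonempty) :
    (A + B).card + (B + C).card + (A + C).card - 1 ≤ 2 * (A + B + C).card := by
  classical
  set M := A.max' hA with hM
  set m := C.min' hC with hm
  set b₀ := B.min' hB with hb₀
  set b₁ := B.max' hB with hb₁
  set S := A + B + C with hS
  set I₁ := (A + B).image (· + m) with hI₁
  set I₂ := (B + C).image (M + ·) with hI₂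
  have hI₁S : I₁ ⊆ S := by
    intro x hx
    simp only [hI₁, Finset.mem_image] at hx
    obtain ⟨y, hy, rfl⟩ := hx
    exact Finset.add_mem_add hy (C.min'_mem hC)
  have hI₂S : I₂ ⊆ S := by
    intro x hx
    simp only [hI₂, Finset.mem_image] at hx
    obtain ⟨y, hy, rfl⟩ := hx
    rw [hS, add_assoc]
    exact Finset.add_mem_add (A.max'_mem hA) hy
  have hcard₁ : I₁.card = (A + B).card :=
    Finset.card_image_of_injective _ (add_left_injective m)
  have hcard₂ : I₂.card = (B + C).card :=
    Finset.card_image_of_injective _ (add_right_injective M)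
  have key₁ : ∀ z : ℤ, z + b₁ ∈ I₁ → z ≤ M + m := by
    intro z hz
    simp only [hI₁, Finset.mem_image] at hz
    obtain ⟨x, hx, hxe⟩ := hz
    rw [Finset.mem_add] at hx
    obtain ⟨a, ha, b, hb, rfl⟩ := hx
    have h1 : a ≤ M := A.le_max' a ha
    have h2 : b ≤ b₁ := B.le_max' b hb
    omega
  have key₂ : ∀ z : ℤ, z + b₀ ∈ I₂ → M + m ≤ z := by
    intro z hz
    simp only [hI₂, Finset.mem_image] at hz
    obtain ⟨y, hy, hye⟩ := hz
    rw [Finset.mem_add] at hy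
    obtain ⟨b, hb, c, hc, rfl⟩ := hy
    have h1 : b₀ ≤ b := B.min'_le b hb
    have h2 : m ≤ c := C.min'_le c hc
    omega
  have hzbS : ∀ z ∈ A + C, ∀ b ∈ B, z + b ∈ S := by
    intro z hz b hb
    rw [Finset.mem_add] at hz
    obtain ⟨a, ha, c, hc, rfl⟩ := hz
    have h := Finset.add_mem_add (Finset.add_mem_add ha hb) hc
    rwa [show a + c + b = a + b + c by ring]
  set R' := (A + C).erase (M + m) with hR'
  have hτ : M + m ∈ A + C := Finset.add_mem_add (A.max'_mem hA) (C.min'_mem hC)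
  have hcardR' : R'.card = (A + C).card - 1 := Finset.card_erase_of_mem hτ
  have hinj : R'.card ≤ (S \ I₁).card + (S \ I₂).card := by
    have hmain := Finset.card_le_card_of_injOn
      (f := fun z => if z + b₁ ∈ I₁ then Sum.inr (z + b₀) else Sum.inl (z + b₁))
      (s := R') (t := (S \ I₁).disjSum (S \ I₂)) ?_ ?_
    · rwa [Finset.card_disjSum] at hmain
    · intro z hz
      have hzAC : z ∈ A + C := Finset.mem_of_mem_erase hz
      have hzne : z ≠ M + m := Finset.ne_of_mem_erase hz
      by_cases h : z + b₁ ∈ I₁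
      · simp only [h, if_pos]
        apply Finset.inr_mem_disjSum.2
        rw [Finset.mem_sdiff]
        refine ⟨hzbS z hzAC b₀ (B.min'_mem hB), ?_⟩
        intro hmem
        exact hzne (le_antisymm (key₁ z h) (key₂ z hmem))
      · simp only [h, if_neg]
        apply Finset.inl_mem_disjSum.2
        rw [Finset.mem_sdiff]
        exact ⟨hzbS z hzAC b₁ (B.max'_mem hB), h⟩
    · intro z₁ h₁ z₂ h₂ heq
      simp only [] at heq
      split_ifs at heq <;> simp at heq <;> omega
  have e1 : (S \ I₁).card + I₁.card = S.card := Finset.card_sdiff_add_card_eq_card hI₁S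
  have e2 : (S \ I₂).card + I₂.card = S.card := Finset.card_sdiff_add_card_eq_card hI₂S
  have hpos : 1 ≤ (A + C).card := Finset.card_pos.2 (hA.add hC)
  omega
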